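/- Let F ∈ 𝓕₀, let H ∈ [F]_𝓕, and let λ ∈ ℂ be such that H(λ) = 0 and F(λ) ≠ 0. Then the entire function z ↦ H(z)/(z−λ) belongs to [F]_𝓕. -/

import Mathlib

open MeasureTheory Complex Filter Metric Set

noncomputable section

/-- Squared norm in the Fock space `𝓕`. -/
def fockNormSq (f : ℂ → ℂ) : ENNReal :=
  ∫⁻ z : ℂ, ENNReal.ofReal (‖f z‖ ^ 2 * Real.exp (-Real.pi * ‖z‖ ^ 2))

/-- Membership in the Fock space `𝓕`. -/
def MemFock (f : ℂ → ℂ) : Prop :=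
  Differentiable ℂ f ∧ fockNormSq f < ⊤

/-- Membership in the Fock space `𝓕_(α)`. -/
def MemFockA (α : ℝ) (f : ℂ → ℂ) : Prop :=
  Differentiable ℂ f ∧
    (∫⁻ z : ℂ, ENNReal.ofReal (‖f z‖ ^ 2 * Real.exp (-(α * Real.pi) * ‖z‖ ^ 2))) < ⊤

/-- The Fock space inner product `⟨f, g⟩`. -/
def fockInner (f g : ℂ → ℂ) : ℂ :=
  ∫ z : ℂ, f z * (starRingEnd ℂ) (g z) * (Real.exp (-Real.pi * ‖z‖ ^ 2) : ℝ)

/-- Membership in `𝓕₀ = {F entire : pF ∈ 𝓕 for every polynomial p}`. -/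
def MemFock0 (f : ℂ → ℂ) : Prop :=
  Differentiable ℂ f ∧ ∀ p : Polynomial ℂ, MemFock fun z => p.eval z * f z

/-- `H` belongs to `[F]_𝓕`, the closure in `𝓕` of the polynomial multiples of `F`. -/
def InPolyClosure (F H : ℂ → ℂ) : Prop :=
  MemFock H ∧ ∀ ε : ℝ, 0 < ε → ∃ p : Polynomial ℂ,
    fockNormSq (fun z => p.eval z * F z - H z) < ENNReal.ofReal (ε ^ 2)

/-- `H` belongs to the closure in `𝓕` of the span of `{e_λ F : λ ∈ ℂ}`. -/
def InExpClosure (F H : ℂ → ℂ) : Prop :=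
  MemFock H ∧ ∀ ε : ℝ, 0 < ε → ∃ (n : ℕ) (c lam : Fin n → ℂ),
    fockNormSq (fun z => (∑ i : Fin n, c i * Complex.exp (lam i * z)) * F z - H z)
      < ENNReal.ofReal (ε ^ 2)

/-- The class `𝓔_{2,α}` of entire functions of type at most `α` for order `2`. -/
def MemE2 (α : ℝ) (F : ℂ → ℂ) : Prop :=
  Differentiable ℂ F ∧
    Filter.limsup (fun z : ℂ => Real.log ‖F z‖ / ‖z‖ ^ 2) (Bornology.cobounded ℂ) ≤ α

/-- The class `𝓔₂ = ∪_{α<∞} 𝓔_{2,α}`. -/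
def MemE2' (F : ℂ → ℂ) : Prop := ∃ α : ℝ, MemE2 α F

/-- The indicator function of `F` for order `2`. -/
def indicator2 (F : ℂ → ℂ) (θ : ℝ) : ℝ :=
  Filter.limsup
    (fun r : ℝ => Real.log ‖F ((r : ℂ) * Complex.exp ((θ : ℂ) * Complex.I))‖ / r ^ 2)
    Filter.atTop

/-- Completely regular growth for order `2`. -/
def CRG (F : ℂ → ℂ) : Prop :=
  ∃ E : Set ℝ, MeasurableSet E ∧ E ⊆ Set.Ici (0 : ℝ) ∧
    Filter.Tendsto (fun R : ℝ => (volume (E ∩ Set.Icc 0 R)).toReal / R)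
      Filter.atTop (nhds 0) ∧
    ∀ ε : ℝ, 0 < ε → ∃ R₀ : ℝ, ∀ r : ℝ, R₀ ≤ r → r ∉ E →
      ∀ θ ∈ Set.Icc (0 : ℝ) (2 * Real.pi),
        |Real.log ‖F ((r : ℂ) * Complex.exp ((θ : ℂ) * Complex.I))‖ / r ^ 2
          - indicator2 F θ| < ε

/-- The maximum modulus of `h` on the circle of radius `r`. -/
def maxModulus (h : ℂ → ℂ) (r : ℝ) : ℝ :=
  sSup ((fun z => ‖h z‖) '' Metric.sphere (0 : ℂ) r)

/-- `h` has order at most `α`. -/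
def OrderAtMost (h : ℂ → ℂ) (α : ℝ) : Prop :=
  Filter.limsup (fun r : ℝ => Real.log (Real.log (maxModulus h r)) / Real.log r)
    Filter.atTop ≤ α

/-- The lattice `𝒵 = ℤ + iℤ`. -/
def latticeZ : Set ℂ := {z : ℂ | ∃ m n : ℤ, z = (m : ℂ) + (n : ℂ) * Complex.I}

/-- `𝒵₀ = 𝒵 ∖ {0}`. -/
def latticeZ0 : Set ℂ := latticeZ \ {0}

/-- `σ₀(z) = σ(z)/z` where `σ` is the Weierstrass sigma function of the lattice `𝒵`. -/
def sigma0 (z : ℂ) : ℂ :=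
  ∏' w : latticeZ0,
    (1 - z / (w : ℂ)) * Complex.exp (z / (w : ℂ) + z ^ 2 / (2 * (w : ℂ) ^ 2))

/-- The Weierstrass sigma function of the lattice `𝒵`. -/
def weierstrassSigma (z : ℂ) : ℂ := z * sigma0 z

/-- Thin subsets of `ℂ`. -/
def IsThin (Ω : Set ℂ) : Prop :=
  ∃ Ω₁ Ω₂ : Set ℂ, MeasurableSet Ω₁ ∧ MeasurableSet Ω₂ ∧ Ω = Ω₁ ∪ Ω₂ ∧
    Filter.Tendsto (fun R : ℝ => (volume (Ω₁ ∩ Metric.ball (0 : ℂ) R)).toReal / R ^ 2)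
      Filter.atTop (nhds 0) ∧
    (∫⁻ z in Ω₂, ENNReal.ofReal (1 / ((‖z‖ + 1) ^ 2 * Real.log (‖z‖ + 2)))) < ⊤

/-- Lattice thin subsets of `𝒵`. -/
def LatticeThin (A : Set ℂ) : Prop :=
  A ⊆ latticeZ ∧ ∀ c : ℝ, 0 < c → IsThin (⋃ w ∈ A, Metric.ball w c)

/-- The function `𝓘(F₁, F₂)`. -/
def calI (F₁ F₂ : ℂ → ℂ) (z : ℂ) : ℂ :=
  (∫ ζ : ℂ, F₂ ζ * (starRingEnd ℂ) (F₁ ζ) / (z - ζ) * (Real.exp (-Real.pi * ‖ζ‖ ^ 2) : ℝ)) -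
  F₂ z / sigma0 z *
    ∫ ζ : ℂ, sigma0 ζ * (starRingEnd ℂ) (F₁ ζ) / (z - ζ) * (Real.exp (-Real.pi * ‖ζ‖ ^ 2) : ℝ)

end

section AuxDivision

open MeasureTheory Complex Filter Metric Set

lemma circle_mean_sq (g : ℂ → ℂ) (hg : Differentiable ℂ g) (w : ℂ) {r : ℝ} (hr : 0 < r) :
    2 * Real.pi * ‖g w‖ ^ 2 ≤ ∫ θ in (0:ℝ)..(2 * Real.pi), ‖g (circleMap w r θ)‖ ^ 2 := by
  have hg2 : Differentiable ℂ (fun z => (g z) ^ 2) := fun z => (hg z).pow 2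
  have hC := circleIntegral_sub_center_inv_smul_of_differentiable_on_off_countable hr
      (Set.countable_empty) (hg2.continuous.continuousOn)
      (fun z _ => hg2.differentiableAt) (f := fun z => (g z) ^ 2) (c := w)
  rw [circleIntegral] at hC
  have heq : EqOn (fun θ : ℝ => deriv (circleMap w r) θ •
      ((circleMap w r θ - w)⁻¹ • (g (circleMap w r θ)) ^ 2))
      (fun θ : ℝ => I * (g (circleMap w r θ)) ^ 2) (Set.uIcc (0:ℝ) (2 * Real.pi)) := by
    intro θ _
    have h0 : circleMap 0 r θ ≠ 0 := by
      simpa [sub_eq_zero] using circleMap_ne_center (c := (0:ℂ)) hr.ne' (θ := θ)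
    simp only [deriv_circleMap, circleMap_sub_center, smul_eq_mul]
    field_simp
  rw [intervalIntegral.integral_congr heq, intervalIntegral.integral_const_mul] at hC
  have h2 : I * (∫ θ in (0:ℝ)..(2 * Real.pi), (g (circleMap w r θ)) ^ 2)
      = I * (2 * Real.pi * (g w) ^ 2) := by
    rw [hC]; simp only [smul_eq_mul]; ring
  have hCC := mul_left_cancel₀ I_ne_zero h2
  have hnorm : ‖(2 * (Real.pi:ℂ) * (g w) ^ 2)‖ = 2 * Real.pi * ‖g w‖ ^ 2 := by
    rw [norm_mul, norm_pow]
    have : (2 * (Real.pi:ℂ)) = ((2 * Real.pi : ℝ) : ℂ) := by push_cast; ring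
    rw [this, Complex.norm_real, Real.norm_eq_abs, abs_of_pos Real.two_pi_pos]
  calc 2 * Real.pi * ‖g w‖ ^ 2
      = ‖∫ θ in (0:ℝ)..(2 * Real.pi), (g (circleMap w r θ)) ^ 2‖ := by rw [hCC, hnorm]
    _ ≤ ∫ θ in (0:ℝ)..(2 * Real.pi), ‖(g (circleMap w r θ)) ^ 2‖ :=
        intervalIntegral.norm_integral_le_integral_norm Real.two_pi_pos.le
    _ = ∫ θ in (0:ℝ)..(2 * Real.pi), ‖g (circleMap w r θ)‖ ^ 2 := by
        simp [norm_pow]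

lemma circle_lint (g : ℂ → ℂ) (hg : Differentiable ℂ g) (w : ℂ) {r : ℝ} (hr : 0 < r) :
    ENNReal.ofReal (2 * Real.pi * ‖g w‖ ^ 2) ≤
      ∫⁻ θ in Set.Ioo (-Real.pi) Real.pi, ENNReal.ofReal (‖g (circleMap w r θ)‖ ^ 2) := by
  have hcont : Continuous fun θ => ‖g (circleMap w r θ)‖ ^ 2 :=
    ((hg.continuous.comp (continuous_circleMap w r)).norm.pow 2)
  have hper : Function.Periodic (fun θ => ‖g (circleMap w r θ)‖ ^ 2) (2 * Real.pi) := by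
    intro θ; simp [(periodic_circleMap w r) θ]
  have h1 : (∫ θ in Set.Ioo (-Real.pi) Real.pi, ‖g (circleMap w r θ)‖ ^ 2)
      = ∫ θ in (0:ℝ)..(2 * Real.pi), ‖g (circleMap w r θ)‖ ^ 2 := by
    rw [← integral_Ioc_eq_integral_Ioo,
      ← intervalIntegral.integral_of_le (by linarith [Real.pi_pos] : (-Real.pi) ≤ Real.pi)]
    have h2 := hper.intervalIntegral_add_eq (-Real.pi) 0
    rw [show -Real.pi + 2 * Real.pi = Real.pi by ring] at h2
    simpa using h2
  have hInt : IntegrableOn (fun θ => ‖g (circleMap w r θ)‖ ^ 2)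
      (Set.Ioo (-Real.pi) Real.pi) := (hcont.integrableOn_Icc).mono_set Set.Ioo_subset_Icc_self
  rw [← ofReal_integral_eq_lintegral_ofReal hInt
    (Filter.Eventually.of_forall fun θ => by positivity)]
  exact ENNReal.ofReal_le_ofReal (by rw [h1]; exact circle_mean_sq g hg w hr)

lemma fock_eval_bound (g : ℂ → ℂ) (hg : Differentiable ℂ g) (w : ℂ) (R : ℝ) (hw : ‖w‖ ≤ R) :
    ENNReal.ofReal (Real.exp (-(Real.pi * (R + 2) ^ 2))) *
      ENNReal.ofReal (2 * Real.pi * ‖g w‖ ^ 2) ≤ fockNormSq g := by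
  set S : Set (ℝ × ℝ) := Set.Ioo (1:ℝ) 2 ×ˢ Set.Ioo (-Real.pi) Real.pi with hS
  set T : ℝ × ℝ → ℝ × ℝ := fun p => (w.re, w.im) + polarCoord.symm p with hTdef
  set B : ℝ × ℝ → ℝ × ℝ →L[ℝ] ℝ × ℝ := fun p =>
    LinearMap.toContinuousLinearMap (Matrix.toLin (Module.Basis.finTwoProd ℝ) (Module.Basis.finTwoProd ℝ)
      !![Real.cos p.2, -p.1 * Real.sin p.2; Real.sin p.2, p.1 * Real.cos p.2]) with hB
  set K : ENNReal := ENNReal.ofReal (Real.exp (-(Real.pi * (R + 2) ^ 2))) with hK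
  have hSm : MeasurableSet S := measurableSet_Ioo.prod measurableSet_Ioo
  have hT : ∀ p ∈ S, HasFDerivWithinAt T (B p) S p := fun p _ =>
    ((hasFDerivAt_polarCoord_symm p).const_add (w.re, w.im)).hasFDerivWithinAt
  have hST : S ⊆ polarCoord.target := by
    rw [polarCoord_target]
    exact Set.prod_mono (fun x hx => lt_trans zero_lt_one hx.1) (fun x hx => hx)
  have hinj : Set.InjOn T S := by
    intro p hp q hq h
    have h2 : polarCoord.symm p = polarCoord.symm q := by
      simpa [hTdef] using h
    have hsrc : polarCoord.symm.source = polarCoord.target := PartialHomeomorph.symm_source _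
    exact polarCoord.symm.injOn (by rw [hsrc]; exact hST hp) (by rw [hsrc]; exact hST hq) h2
  have hdet : ∀ p ∈ S, |(B p).det| = p.1 := by
    intro p hp
    have : (B p).det = p.1 := by
      conv_rhs => rw [← one_mul p.1, ← Real.cos_sq_add_sin_sq p.2]
      simp only [hB, neg_mul, LinearMap.det_toContinuousLinearMap, LinearMap.det_toLin,
        Matrix.det_fin_two_of, sub_neg_eq_add]
      ring
    rw [this, abs_of_pos (lt_trans zero_lt_one hp.1.1)]
  have hTz : ∀ p : ℝ × ℝ, Complex.measurableEquivRealProd.symm (T p) = circleMap w p.1 p.2 := by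
    intro p
    apply Complex.ext <;>
      simp [hTdef, circleMap, Complex.exp_ofReal_mul_I_re, Complex.exp_ofReal_mul_I_im,
        Complex.measurableEquivRealProd, Complex.equivRealProd]
  set G : ℝ × ℝ → ENNReal := fun x =>
    ENNReal.ofReal (‖g (Complex.measurableEquivRealProd.symm x)‖ ^ 2 *
      Real.exp (-Real.pi * ‖Complex.measurableEquivRealProd.symm x‖ ^ 2)) with hG
  have hsymmcont : Continuous (fun x : ℝ × ℝ => Complex.measurableEquivRealProd.symm x) := by
    have : (fun x : ℝ × ℝ => Complex.measurableEquivRealProd.symm x)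
        = fun x : ℝ × ℝ => Complex.equivRealProdCLM.symm x := rfl
    rw [this]; exact Complex.equivRealProdCLM.symm.continuous
  have hGmeas : Measurable G := by
    apply ENNReal.measurable_ofReal.comp
    exact (((hg.continuous.comp hsymmcont).norm.pow 2).mul
      ((Real.continuous_exp.comp ((continuous_const.mul (hsymmcont.norm.pow 2)))))).measurable
  have stepA : fockNormSq g = ∫⁻ x : ℝ × ℝ, G x := by
    rw [fockNormSq, ← Complex.volume_preserving_equiv_real_prod.lintegral_comp hGmeas]
    exact lintegral_congr fun z => by simp [hG]
  have stepC : ∫⁻ x in T '' S, G x = ∫⁻ p in S, ENNReal.ofReal |(B p).det| * G (T p) :=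
    lintegral_image_eq_lintegral_abs_det_fderiv_mul volume hSm hT hinj G
  have hcmCont : Continuous fun p : ℝ × ℝ => circleMap w p.1 p.2 := by
    unfold circleMap; fun_prop
  have hinnerMeas : Measurable fun p : ℝ × ℝ => ENNReal.ofReal (‖g (circleMap w p.1 p.2)‖ ^ 2) :=
    ENNReal.measurable_ofReal.comp ((hg.continuous.comp hcmCont).norm.pow 2).measurable
  have stepD : ∀ p ∈ S, K * ENNReal.ofReal (‖g (circleMap w p.1 p.2)‖ ^ 2)
      ≤ ENNReal.ofReal |(B p).det| * G (T p) := by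
    intro p hp
    have h1 : (1:ENNReal) ≤ ENNReal.ofReal |(B p).det| := by
      rw [hdet p hp]; exact ENNReal.one_le_ofReal.2 hp.1.1.le
    have hz : ‖circleMap w p.1 p.2‖ ≤ R + 2 := by
      have : circleMap w p.1 p.2 = w + circleMap 0 p.1 p.2 := by
        rw [← circleMap_sub_center w p.1 p.2]; ring
      rw [this]
      refine (norm_add_le _ _).trans ?_
      have : ‖circleMap 0 p.1 p.2‖ = |p.1| := by
        simpa using Complex.abs_circleMap_zero p.1 p.2
      rw [this, abs_of_pos (lt_trans zero_lt_one hp.1.1)]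
      have := hp.1.2
      linarith
    have hexp : Real.exp (-(Real.pi * (R + 2) ^ 2))
        ≤ Real.exp (-Real.pi * ‖circleMap w p.1 p.2‖ ^ 2) := by
      apply Real.exp_le_exp.2
      have h2 : ‖circleMap w p.1 p.2‖ ^ 2 ≤ (R + 2) ^ 2 := by
        apply sq_le_sq' _ hz
        have : (0:ℝ) ≤ ‖circleMap w p.1 p.2‖ := norm_nonneg _
        linarith
      nlinarith [Real.pi_pos]
    calc K * ENNReal.ofReal (‖g (circleMap w p.1 p.2)‖ ^ 2)
        ≤ ENNReal.ofReal (Real.exp (-Real.pi * ‖circleMap w p.1 p.2‖ ^ 2)) *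
          ENNReal.ofReal (‖g (circleMap w p.1 p.2)‖ ^ 2) :=
          mul_le_mul_left (ENNReal.ofReal_le_ofReal hexp) _
      _ = G (T p) := by
          rw [hG, ← ENNReal.ofReal_mul (Real.exp_nonneg _)]
          simp only [hTz p]
          rw [mul_comm]
      _ ≤ ENNReal.ofReal |(B p).det| * G (T p) := by
          nth_rewrite 1 [← one_mul (G (T p))]
          exact mul_le_mul_left h1 _
  have stepE : K * ENNReal.ofReal (2 * Real.pi * ‖g w‖ ^ 2)
      ≤ ∫⁻ p in S, K * ENNReal.ofReal (‖g (circleMap w p.1 p.2)‖ ^ 2) := by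
    have hfub : (∫⁻ p in S, ENNReal.ofReal (‖g (circleMap w p.1 p.2)‖ ^ 2))
        = ∫⁻ r in Set.Ioo (1:ℝ) 2, ∫⁻ θ in Set.Ioo (-Real.pi) Real.pi,
            ENNReal.ofReal (‖g (circleMap w r θ)‖ ^ 2) := by
      rw [hS, MeasureTheory.Measure.volume_eq_prod, ← Measure.prod_restrict]
      exact lintegral_prod _ hinnerMeas.aemeasurable
    rw [lintegral_const_mul' _ _ (by simp [hK] : K ≠ ⊤), hfub]
    apply mul_le_mul_right
    calc ENNReal.ofReal (2 * Real.pi * ‖g w‖ ^ 2)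
        = ∫⁻ _ in Set.Ioo (1:ℝ) 2, ENNReal.ofReal (2 * Real.pi * ‖g w‖ ^ 2) := by
          rw [setLIntegral_const, Real.volume_Ioo]
          norm_num
      _ ≤ _ := setLIntegral_mono' measurableSet_Ioo fun r hr =>
          circle_lint g hg w (lt_trans zero_lt_one hr.1)
  calc K * ENNReal.ofReal (2 * Real.pi * ‖g w‖ ^ 2)
      ≤ ∫⁻ p in S, K * ENNReal.ofReal (‖g (circleMap w p.1 p.2)‖ ^ 2) := stepE
    _ ≤ ∫⁻ p in S, ENNReal.ofReal |(B p).det| * G (T p) := setLIntegral_mono' hSm stepD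
    _ = ∫⁻ x in T '' S, G x := stepC.symm
    _ ≤ ∫⁻ x : ℝ × ℝ, G x := setLIntegral_le_lintegral _ _
    _ = fockNormSq g := stepA.symm

lemma fock_integrand_meas {f : ℂ → ℂ} (hf : Continuous f) :
    Measurable fun z : ℂ => ENNReal.ofReal (‖f z‖ ^ 2 * Real.exp (-Real.pi * ‖z‖ ^ 2)) :=
  ENNReal.measurable_ofReal.comp (((hf.norm.pow 2).mul
    (Real.continuous_exp.comp (continuous_const.mul (continuous_norm.pow 2))))).measurable

lemma dslope_differentiable (g : ℂ → ℂ) (hg : Differentiable ℂ g) (lam : ℂ) :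
    Differentiable ℂ (dslope g lam) := by
  have := (differentiableOn_dslope (s := Set.univ) (c := lam)
    (Filter.univ_mem)).2 hg.differentiableOn
  rw [← differentiableOn_univ]; exact this

lemma norm_dslope_eq (g : ℂ → ℂ) {lam : ℂ} (h0 : g lam = 0) {z : ℂ} (hz : z ≠ lam) :
    ‖dslope g lam z‖ = ‖g z‖ / ‖z - lam‖ := by
  rw [dslope_of_ne _ hz, slope_def_field, h0, sub_zero, norm_div]

noncomputable def fockDivConst (lam : ℂ) : ℝ :=
  Real.pi * (Real.exp (Real.pi * (‖lam‖ + 3) ^ 2) / (2 * Real.pi)) + 1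

lemma fock_div_bound (g : ℂ → ℂ) (hg : Differentiable ℂ g) (lam : ℂ) (h0 : g lam = 0) :
    fockNormSq (dslope g lam) ≤ ENNReal.ofReal (fockDivConst lam) * fockNormSq g := by
  have hpi := Real.pi_pos
  have hdc_pos : 0 < fockDivConst lam := by
    unfold fockDivConst; positivity
  by_cases htop : fockNormSq g = ⊤
  · rw [htop, ENNReal.mul_top (ENNReal.ofReal_pos.2 hdc_pos).ne']
    exact le_top
  set A := (fockNormSq g).toReal with hA
  have hAnn : 0 ≤ A := ENNReal.toReal_nonneg
  have hAe : fockNormSq g = ENNReal.ofReal A := (ENNReal.ofReal_toReal htop).symm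
  set Ce : ℝ := Real.exp (Real.pi * (‖lam‖ + 3) ^ 2) / (2 * Real.pi) with hCe
  have hCenn : 0 ≤ Ce * A := by positivity
  have hsphere : ∀ ζ ∈ sphere lam 1, ‖g ζ‖ ^ 2 ≤ Ce * A := by
    intro ζ hζ
    have hdist : dist ζ lam = 1 := mem_sphere.1 hζ
    have hζn : ‖ζ‖ ≤ ‖lam‖ + 1 := by
      calc ‖ζ‖ = ‖lam + (ζ - lam)‖ := by ring_nf
        _ ≤ ‖lam‖ + ‖ζ - lam‖ := norm_add_le _ _
        _ = ‖lam‖ + 1 := by rw [← dist_eq_norm ζ lam, hdist]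
    have hev := fock_eval_bound g hg ζ (‖lam‖ + 1) hζn
    rw [hAe, ← ENNReal.ofReal_mul (Real.exp_nonneg _)] at hev
    have hre := (ENNReal.ofReal_le_ofReal_iff hAnn).1 hev
    rw [show ‖lam‖ + 1 + 2 = ‖lam‖ + 3 by ring, Real.exp_neg] at hre
    have hEpos := Real.exp_pos (Real.pi * (‖lam‖ + 3) ^ 2)
    rw [hCe, div_mul_eq_mul_div, le_div_iff₀ Real.two_pi_pos]
    have h4 : Real.exp (Real.pi * (‖lam‖ + 3) ^ 2) *
        (Real.exp (Real.pi * (‖lam‖ + 3) ^ 2))⁻¹ = 1 := mul_inv_cancel₀ hEpos.ne'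
    have h5 := mul_le_mul_of_nonneg_left hre hEpos.le
    rw [← mul_assoc, h4, one_mul] at h5
    nlinarith [h5]
  set C0 := Real.sqrt (Ce * A) with hC0
  have hball : ∀ z ∈ closedBall lam 1, ‖dslope g lam z‖ ≤ C0 := by
    intro z hz
    have hcl : z ∈ closure (ball lam 1) := by rwa [closure_ball lam one_ne_zero]
    refine Complex.norm_le_of_forall_mem_frontier_norm_le isBounded_ball
      ((dslope_differentiable g hg lam).diffContOnCl) (fun ζ hζ => ?_) hcl
    rw [frontier_ball lam one_ne_zero] at hζ
    have hd1 : dist ζ lam = 1 := mem_sphere.1 hζ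
    have hζlam : ζ ≠ lam := by
      intro h; rw [h] at hd1; simp at hd1
    rw [norm_dslope_eq g h0 hζlam, ← dist_eq_norm ζ lam, hd1, div_one]
    calc ‖g ζ‖ = Real.sqrt (‖g ζ‖ ^ 2) := (Real.sqrt_sq (norm_nonneg _)).symm
      _ ≤ C0 := Real.sqrt_le_sqrt (hsphere ζ hζ)
  have hmb : MeasurableSet (closedBall lam 1) := measurableSet_closedBall
  have hsplit := lintegral_add_compl (μ := volume)
    (fun z : ℂ => ENNReal.ofReal (‖dslope g lam z‖ ^ 2 * Real.exp (-Real.pi * ‖z‖ ^ 2))) hmb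
  have h1 : (∫⁻ z in closedBall lam 1,
      ENNReal.ofReal (‖dslope g lam z‖ ^ 2 * Real.exp (-Real.pi * ‖z‖ ^ 2)))
      ≤ ENNReal.ofReal (Real.pi * Ce) * fockNormSq g := by
    calc (∫⁻ z in closedBall lam 1,
        ENNReal.ofReal (‖dslope g lam z‖ ^ 2 * Real.exp (-Real.pi * ‖z‖ ^ 2)))
        ≤ ∫⁻ _ in closedBall lam 1, ENNReal.ofReal (Ce * A) := by
          refine setLIntegral_mono' hmb fun z hz => ENNReal.ofReal_le_ofReal ?_
          have he1 : Real.exp (-Real.pi * ‖z‖ ^ 2) ≤ 1 := by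
            rw [Real.exp_le_one_iff]
            have : (0:ℝ) ≤ ‖z‖ ^ 2 := by positivity
            nlinarith
          have hb := hball z hz
          have hb2 : ‖dslope g lam z‖ ^ 2 ≤ Ce * A := by
            have hC0sq : C0 ^ 2 = Ce * A := Real.sq_sqrt hCenn
            nlinarith [norm_nonneg (dslope g lam z)]
          calc ‖dslope g lam z‖ ^ 2 * Real.exp (-Real.pi * ‖z‖ ^ 2)
              ≤ (Ce * A) * 1 := by
                apply mul_le_mul hb2 he1 (Real.exp_nonneg _) hCenn
            _ = Ce * A := mul_one _
      _ = ENNReal.ofReal (Ce * A) * volume (closedBall lam 1) := setLIntegral_const _ _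
      _ = ENNReal.ofReal (Ce * A) * ENNReal.ofReal Real.pi := by
          rw [Complex.volume_closedBall]
          congr 1
          rw [ENNReal.ofReal_one, one_pow, one_mul, ENNReal.ofReal,
            Real.toNNReal_of_nonneg Real.pi_pos.le]
          rfl
      _ = ENNReal.ofReal (Real.pi * Ce) * ENNReal.ofReal A := by
          rw [← ENNReal.ofReal_mul hCenn, ← ENNReal.ofReal_mul (by positivity : (0:ℝ) ≤ Real.pi * Ce)]
          ring_nf
      _ = ENNReal.ofReal (Real.pi * Ce) * fockNormSq g := by rw [← hAe]
  have h2 : (∫⁻ z in (closedBall lam 1)ᶜ,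
      ENNReal.ofReal (‖dslope g lam z‖ ^ 2 * Real.exp (-Real.pi * ‖z‖ ^ 2)))
      ≤ fockNormSq g := by
    rw [fockNormSq]
    refine le_trans (setLIntegral_mono' hmb.compl fun z hz => ?_) (setLIntegral_le_lintegral _ _)
    have hd : 1 < dist z lam := by
      by_contra h
      exact hz (mem_closedBall.2 (not_lt.1 h))
    have hzl : z ≠ lam := by
      intro h; rw [h] at hd; simp at hd; linarith
    apply ENNReal.ofReal_le_ofReal
    apply mul_le_mul_of_nonneg_right _ (Real.exp_nonneg _)
    have : ‖dslope g lam z‖ ≤ ‖g z‖ := by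
      rw [norm_dslope_eq g h0 hzl]
      apply div_le_self (norm_nonneg _)
      rw [← dist_eq_norm z lam]; linarith
    have h0' := norm_nonneg (dslope g lam z)
    nlinarith
  calc fockNormSq (dslope g lam)
      = (∫⁻ z in closedBall lam 1,
          ENNReal.ofReal (‖dslope g lam z‖ ^ 2 * Real.exp (-Real.pi * ‖z‖ ^ 2)))
        + ∫⁻ z in (closedBall lam 1)ᶜ,
          ENNReal.ofReal (‖dslope g lam z‖ ^ 2 * Real.exp (-Real.pi * ‖z‖ ^ 2)) := by
        rw [fockNormSq]; exact hsplit.symm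
    _ ≤ ENNReal.ofReal (Real.pi * Ce) * fockNormSq g + fockNormSq g := add_le_add h1 h2
    _ = (ENNReal.ofReal (Real.pi * Ce) + 1) * fockNormSq g := by ring
    _ = ENNReal.ofReal (fockDivConst lam) * fockNormSq g := by
        rw [fockDivConst, ENNReal.ofReal_add (by positivity) zero_le_one, ENNReal.ofReal_one]

lemma fockNormSq_congr_off (f h : ℂ → ℂ) (lam : ℂ) (he : ∀ z ≠ lam, f z = h z) :
    fockNormSq f = fockNormSq h := by
  apply lintegral_congr_ae
  have hae : f =ᵐ[volume] h := by
    rw [Filter.EventuallyEq, ae_iff]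
    refine measure_mono_null (fun z hz => ?_) (measure_singleton lam)
    simp only [Set.mem_setOf_eq] at hz
    simp only [Set.mem_singleton_iff]
    by_contra hzl
    exact hz (he z hzl)
  exact hae.mono fun z hz => by simp only [hz]

lemma fockNormSq_add_le (u v : ℂ → ℂ) (hu : Continuous u) (hv : Continuous v) :
    fockNormSq (fun z => u z + v z) ≤ 2 * fockNormSq u + 2 * fockNormSq v := by
  have hmono : fockNormSq (fun z => u z + v z) ≤
      ∫⁻ z : ℂ, (2 * ENNReal.ofReal (‖u z‖ ^ 2 * Real.exp (-Real.pi * ‖z‖ ^ 2))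
        + 2 * ENNReal.ofReal (‖v z‖ ^ 2 * Real.exp (-Real.pi * ‖z‖ ^ 2))) := by
    apply lintegral_mono
    intro z
    have hexp := Real.exp_nonneg (-Real.pi * ‖z‖ ^ 2)
    have hpt : ‖u z + v z‖ ^ 2 * Real.exp (-Real.pi * ‖z‖ ^ 2) ≤
        2 * (‖u z‖ ^ 2 * Real.exp (-Real.pi * ‖z‖ ^ 2))
        + 2 * (‖v z‖ ^ 2 * Real.exp (-Real.pi * ‖z‖ ^ 2)) := by
      have h1 := norm_add_le (u z) (v z)
      have h2 := norm_nonneg (u z)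
      have h3 := norm_nonneg (v z)
      have h4 := norm_nonneg (u z + v z)
      have h5 : ‖u z + v z‖ ^ 2 ≤ (‖u z‖ + ‖v z‖) ^ 2 := pow_le_pow_left₀ h4 h1 2
      have h6 : ‖u z + v z‖ ^ 2 ≤ 2 * ‖u z‖ ^ 2 + 2 * ‖v z‖ ^ 2 := by
        nlinarith [sq_nonneg (‖u z‖ - ‖v z‖)]
      nlinarith [mul_le_mul_of_nonneg_right h6 hexp]
    calc ENNReal.ofReal (‖u z + v z‖ ^ 2 * Real.exp (-Real.pi * ‖z‖ ^ 2))
        ≤ ENNReal.ofReal (2 * (‖u z‖ ^ 2 * Real.exp (-Real.pi * ‖z‖ ^ 2))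
          + 2 * (‖v z‖ ^ 2 * Real.exp (-Real.pi * ‖z‖ ^ 2))) := ENNReal.ofReal_le_ofReal hpt
      _ = _ := by
          rw [ENNReal.ofReal_add (by positivity) (by positivity),
            ENNReal.ofReal_mul (by norm_num : (0:ℝ) ≤ 2),
            ENNReal.ofReal_mul (by norm_num : (0:ℝ) ≤ 2)]
          norm_num
  refine hmono.trans ?_
  rw [lintegral_add_left ((fock_integrand_meas hu).const_mul 2),
    lintegral_const_mul' _ _ (by norm_num : (2:ENNReal) ≠ ⊤),
    lintegral_const_mul' _ _ (by norm_num : (2:ENNReal) ≠ ⊤)]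
  rfl

lemma fockNormSq_const_mul (c : ℂ) (f : ℂ → ℂ) (hf : Continuous f) :
    fockNormSq (fun z => c * f z) = ENNReal.ofReal (‖c‖ ^ 2) * fockNormSq f := by
  rw [fockNormSq, fockNormSq, ← lintegral_const_mul' _ _ ENNReal.ofReal_ne_top]
  apply lintegral_congr fun z => ?_
  rw [← ENNReal.ofReal_mul (by positivity), norm_mul, mul_pow, mul_assoc]



lemma fockDivConst_pos (lam : ℂ) : 0 < fockDivConst lam := by
  have := Real.pi_pos; unfold fockDivConst; positivity

end AuxDivision

theorem division_in_poly_closure (F : ℂ → ℂ) (hF : MemFock0 F) (H : ℂ → ℂ)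
    (hH : InPolyClosure F H) (lam : ℂ) (hHlam : H lam = 0) (hFlam : F lam ≠ 0) :
    ∃ H₁ : ℂ → ℂ, Differentiable ℂ H₁ ∧
      (∀ z : ℂ, z ≠ lam → H₁ z = H z / (z - lam)) ∧
      InPolyClosure F H₁ := by
  obtain ⟨⟨hHdiff, hHfin⟩, happrox⟩ := hH
  have hFdiff : Differentiable ℂ F := hF.1
  have hFfin : fockNormSq F < ⊤ := by
    have h1 := (hF.2 1).2
    simpa using h1
  have hFlamn : (0:ℝ) < ‖F lam‖ := norm_pos_iff.2 hFlam
  refine ⟨dslope H lam, dslope_differentiable H hHdiff lam, fun z hz => ?_, ?_, ?_⟩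
  · rw [dslope_of_ne _ hz, slope_def_field, hHlam, sub_zero]
  · exact ⟨dslope_differentiable H hHdiff lam,
      lt_of_le_of_lt (fock_div_bound H hHdiff lam hHlam)
        (ENNReal.mul_lt_top ENNReal.ofReal_lt_top hHfin)⟩
  -- approximation
  intro ε hε
  set KD := fockDivConst lam with hKDdef
  have hKD : 0 < KD := fockDivConst_pos lam
  set CE : ℝ := Real.exp (Real.pi * (‖lam‖ + 2) ^ 2) / (2 * Real.pi) with hCEdef
  have hCE : 0 < CE := by have := Real.pi_pos; positivity
  set AF : ℝ := (fockNormSq F).toReal with hAFdef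
  have hAF : 0 ≤ AF := ENNReal.toReal_nonneg
  have hAFe : fockNormSq F = ENNReal.ofReal AF := (ENNReal.ofReal_toReal hFfin.ne).symm
  set c2 : ℝ := CE / ‖F lam‖ ^ 2 with hc2def
  have hc2 : 0 ≤ c2 := by positivity
  set Btot : ℝ := KD * (2 + 2 * c2 * AF) + 1 with hBdef
  have hB1 : 1 ≤ Btot := by
    have h0 : 0 ≤ c2 * AF := mul_nonneg hc2 hAF
    have h1 : 0 ≤ KD * (2 + 2 * c2 * AF) := mul_nonneg hKD.le (by nlinarith)
    linarith
  have hBpos : 0 < Btot := by linarith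
  set δ : ℝ := ε / Real.sqrt Btot with hδdef
  have hδ : 0 < δ := div_pos hε (Real.sqrt_pos.2 hBpos)
  have hδsq : δ ^ 2 = ε ^ 2 / Btot := by
    rw [hδdef, div_pow, Real.sq_sqrt hBpos.le]
  obtain ⟨p, hp⟩ := happrox δ hδ
  have hφdiff : Differentiable ℂ (fun z => p.eval z * F z - H z) :=
    ((p.differentiable).mul hFdiff).sub hHdiff
  have hφle : fockNormSq (fun z => p.eval z * F z - H z) ≤ ENNReal.ofReal (δ ^ 2) := hp.le
  -- bound on |p.eval lam|
  have hplam : ‖p.eval lam‖ ^ 2 ≤ c2 * δ ^ 2 := by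
    have hev := fock_eval_bound _ hφdiff lam ‖lam‖ le_rfl
    have hev2 := hev.trans hφle
    rw [← ENNReal.ofReal_mul (Real.exp_nonneg _)] at hev2
    have hre := (ENNReal.ofReal_le_ofReal_iff (by positivity)).1 hev2
    have hval : ‖p.eval lam * F lam - H lam‖ = ‖p.eval lam‖ * ‖F lam‖ := by
      rw [hHlam, sub_zero, norm_mul]
    rw [hval] at hre
    have hEpos := Real.exp_pos (Real.pi * (‖lam‖ + 2) ^ 2)
    rw [Real.exp_neg] at hre
    have h5 := mul_le_mul_of_nonneg_left hre hEpos.le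
    rw [← mul_assoc, mul_inv_cancel₀ hEpos.ne', one_mul] at h5
    rw [hc2def, hCEdef, div_div, div_mul_eq_mul_div, le_div_iff₀ (by positivity)]
    calc ‖p.eval lam‖ ^ 2 * (2 * Real.pi * ‖F lam‖ ^ 2)
        = 2 * Real.pi * (‖p.eval lam‖ * ‖F lam‖) ^ 2 := by ring
      _ ≤ Real.exp (Real.pi * (‖lam‖ + 2) ^ 2) * δ ^ 2 := h5
      _ = Real.exp (Real.pi * (‖lam‖ + 2) ^ 2) * δ ^ 2 := rfl
  -- the auxiliary function g
  set c : ℂ := -(p.eval lam) with hcdef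
  set g : ℂ → ℂ := fun z => (p.eval z * F z - H z) + c * F z with hgdef
  have hgdiff : Differentiable ℂ g := hφdiff.add ((differentiable_const c).mul hFdiff)
  have hg0 : g lam = 0 := by
    simp only [hgdef, hcdef, hHlam]
    ring
  -- the polynomial q
  have hdvd : Polynomial.X - Polynomial.C lam ∣ p - Polynomial.C (p.eval lam) :=
    Polynomial.dvd_iff_isRoot.2 (by simp [Polynomial.IsRoot])
  obtain ⟨q, hq⟩ := hdvd
  have heval : ∀ z : ℂ, (z - lam) * q.eval z = p.eval z - p.eval lam := by
    intro z
    have := congrArg (Polynomial.eval z) hq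
    simpa using this.symm
  refine ⟨q, ?_⟩
  have hkey : ∀ z, z ≠ lam → q.eval z * F z - dslope H lam z = dslope g lam z := by
    intro z hz
    have hzl : z - lam ≠ 0 := sub_ne_zero.2 hz
    have hgz : g z = (p.eval z * F z - H z) + c * F z := rfl
    rw [dslope_of_ne _ hz, dslope_of_ne _ hz, slope_def_field, slope_def_field, hg0, hHlam,
      sub_zero, sub_zero, hgz]
    simp only [hcdef]
    have h7 := heval z
    field_simp
    linear_combination F z * h7
  have hcongr : fockNormSq (fun z => q.eval z * F z - dslope H lam z)
      = fockNormSq (dslope g lam) :=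
    fockNormSq_congr_off _ _ lam (fun z hz => hkey z hz)
  have hgbound : fockNormSq g ≤ ENNReal.ofReal (2 * δ ^ 2 + 2 * (c2 * δ ^ 2) * AF) := by
    have hsum := fockNormSq_add_le (fun z => p.eval z * F z - H z) (fun z => c * F z)
      hφdiff.continuous (continuous_const.mul hFdiff.continuous)
    have hcmul := fockNormSq_const_mul c F hFdiff.continuous
    calc fockNormSq g ≤ 2 * fockNormSq (fun z => p.eval z * F z - H z)
          + 2 * fockNormSq (fun z => c * F z) := hsum
      _ ≤ 2 * ENNReal.ofReal (δ ^ 2)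
          + 2 * (ENNReal.ofReal (c2 * δ ^ 2) * ENNReal.ofReal AF) := by
          apply add_le_add
          · exact mul_le_mul_right hφle 2
          · rw [hcmul, hAFe]
            apply mul_le_mul_right
            apply mul_le_mul_left
            apply ENNReal.ofReal_le_ofReal
            simpa [hcdef] using hplam
      _ = ENNReal.ofReal (2 * δ ^ 2 + 2 * (c2 * δ ^ 2) * AF) := by
          rw [← ENNReal.ofReal_mul (by positivity : (0:ℝ) ≤ c2 * δ ^ 2),
            ← ENNReal.ofReal_ofNat 2,
            ← ENNReal.ofReal_mul (by norm_num : (0:ℝ) ≤ 2),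
            ← ENNReal.ofReal_mul (by norm_num : (0:ℝ) ≤ 2),
            ← ENNReal.ofReal_add (by positivity) (by positivity)]
          exact congrArg ENNReal.ofReal (by ring)
  calc fockNormSq (fun z => q.eval z * F z - dslope H lam z)
      = fockNormSq (dslope g lam) := hcongr
    _ ≤ ENNReal.ofReal KD * fockNormSq g := fock_div_bound g hgdiff lam hg0
    _ ≤ ENNReal.ofReal KD * ENNReal.ofReal (2 * δ ^ 2 + 2 * (c2 * δ ^ 2) * AF) :=
        mul_le_mul_right hgbound _
    _ = ENNReal.ofReal (KD * (2 * δ ^ 2 + 2 * (c2 * δ ^ 2) * AF)) :=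
        (ENNReal.ofReal_mul hKD.le).symm
    _ < ENNReal.ofReal (ε ^ 2) := by
        rw [ENNReal.ofReal_lt_ofReal_iff (by positivity)]
        have hexpand : KD * (2 * δ ^ 2 + 2 * (c2 * δ ^ 2) * AF) = (Btot - 1) * δ ^ 2 := by
          rw [hBdef]; ring
        rw [hexpand, hδsq]
        rw [div_eq_mul_inv, ← mul_assoc]
        have hlt : (Btot - 1) * ε ^ 2 < Btot * ε ^ 2 := by nlinarith
        calc (Btot - 1) * ε ^ 2 * Btot⁻¹ < Btot * ε ^ 2 * Btot⁻¹ := by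
              apply mul_lt_mul_of_pos_right hlt
              exact inv_pos.2 hBpos
          _ = ε ^ 2 := by field_simp
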